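/- Let D ≥ 1, n ≥ 3, and let T : (Fin n → Fin D × Fin D) → ℝ be a pair tensor with within-pair symmetry, slot-exchange symmetry, and satisfying the cyclic identity. Then for any three pairwise distinct slots k, l, m, any a, b, c, d ∈ Fin D, and any fixed assignment of the remaining slots: the component of T with slots k, l, m set to (a,b), (a,c), (a,d) equals −(1/2) times the component of T with slots k, l, m set to (a,a), (a,d), (b,c) (remaining slots unchanged). -/
import Mathlib


/-- A pair tensor has within-pair symmetry if its value is unchanged when the
two entries of any single pair-slot are swapped. -/
def WithinPairSymm {n D : ℕ} (T : (Fin n → Fin D × Fin D) → ℝ) : Prop :=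
  ∀ (P : Fin n → Fin D × Fin D) (k : Fin n),
    T (Function.update P k ((P k).2, (P k).1)) = T P

/-- A pair tensor has slot-exchange symmetry if its value is unchanged under
precomposition with any permutation of the slots. -/
def SlotExchangeSymm {n D : ℕ} (T : (Fin n → Fin D × Fin D) → ℝ) : Prop :=
  ∀ (P : Fin n → Fin D × Fin D) (σ : Equiv.Perm (Fin n)), T (P ∘ σ) = T P

/-- A pair tensor satisfies the cyclic identity if for any two distinct slots,
any fixed assignment of the remaining slots, and any indices `a b c d`, the
cyclic sum of its components vanishes. -/
def CyclicIdentity {n D : ℕ} (T : (Fin n → Fin D × Fin D) → ℝ) : Prop :=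
  ∀ (P : Fin n → Fin D × Fin D) (k l : Fin n), k ≠ l →
    ∀ a b c d : Fin D,
      T (Function.update (Function.update P k (a, b)) l (c, d)) +
      T (Function.update (Function.update P k (a, c)) l (d, b)) +
      T (Function.update (Function.update P k (a, d)) l (b, c)) = 0


section
variable {n D : ℕ} {T : (Fin n → Fin D × Fin D) → ℝ}

lemma wp_update (hwp : WithinPairSymm T) (X : Fin n → Fin D × Fin D) (k : Fin n)
    (x y : Fin D) :
    T (Function.update X k (x, y)) = T (Function.update X k (y, x)) := by
  have h := hwp (Function.update X k (x, y)) k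
  simpa [Function.update_self, Function.update_idem] using h.symm
end

theorem stmt_4 (D n : ℕ) (hD : 1 ≤ D) (hn : 3 ≤ n)
    (T : (Fin n → Fin D × Fin D) → ℝ)
    (hwp : WithinPairSymm T) (hse : SlotExchangeSymm T)
    (hcyc : CyclicIdentity T) :
    ∀ (P : Fin n → Fin D × Fin D) (k l m : Fin n),
      k ≠ l → k ≠ m → l ≠ m → ∀ a b c d : Fin D,
      T (Function.update (Function.update (Function.update P k (a, b)) l (a, c)) m (a, d)) =
      -(1 / 2 : ℝ) *
        T (Function.update (Function.update (Function.update P k (a, a)) l (a, d)) m (b, c)) := by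
  intro P k l m hkl hkm hlm a b c d
  have hlk : l ≠ k := Ne.symm hkl
  have hmk : m ≠ k := Ne.symm hkm
  have hml : m ≠ l := Ne.symm hlm
  set Q := Function.update P m (a, d) with hQ
  have hQm : Q m = (a, d) := by rw [hQ]; simp
  have hQne : ∀ i, i ≠ m → Q i = P i := fun i h => by
    rw [hQ]; exact Function.update_of_ne h _ _
  have hmain := hcyc Q k l hkl a b a c
  -- identify term1 with the LHS
  have e1 : Function.update (Function.update Q k (a, b)) l (a, c)
      = Function.update (Function.update (Function.update P k (a, b)) l (a, c)) m (a, d) := by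
    funext i
    by_cases hik : i = k <;> by_cases hil : i = l <;> by_cases him : i = m <;>
      simp_all [Function.update_apply, hQm, hQne]
  -- term2: within-pair symmetry at slot l
  have e2 : T (Function.update (Function.update Q k (a, a)) l (c, b))
      = T (Function.update (Function.update Q k (a, a)) l (b, c)) :=
    wp_update hwp _ l c b
  -- term3: within-pair at l, then swap slots k and l
  have e3 : T (Function.update (Function.update Q k (a, c)) l (b, a))
      = T (Function.update (Function.update Q k (a, b)) l (a, c)) := by
    rw [wp_update hwp _ l b a]
    have hswap : (Function.update (Function.update Q k (a, c)) l (a, b)) ∘ (Equiv.swap k l)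
        = Function.update (Function.update Q k (a, b)) l (a, c) := by
      funext i
      by_cases hik : i = k <;> by_cases hil : i = l <;>
        simp_all [Function.comp, Equiv.swap_apply_def, Function.update_apply, hQm, hQne]
    rw [← hswap]
    exact (hse _ _).symm
  -- identify the RHS
  have e4 : T (Function.update (Function.update Q k (a, a)) l (b, c))
      = T (Function.update (Function.update (Function.update P k (a, a)) l (a, d)) m (b, c)) := by
    have hswap : (Function.update (Function.update Q k (a, a)) l (b, c)) ∘ (Equiv.swap l m)
        = Function.update (Function.update (Function.update P k (a, a)) l (a, d)) m (b, c) := by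
      funext i
      by_cases hik : i = k <;> by_cases hil : i = l <;> by_cases him : i = m <;>
        simp_all [Function.comp, Equiv.swap_apply_def, Function.update_apply, hQm, hQne]
    rw [← hswap]
    exact (hse _ _).symm
  rw [e3, e2, e4, e1] at hmain
  linarith
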